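/- Let p, n ≥ 1, let a, b, c be real numbers, and let Z be the (p+n)×(p+n) matrix with z_{ij} = a for i,j ≤ p, z_{ij} = c for i,j > p, and z_{ij} = b otherwise. Let Q be the (2(p+n)−1)×(2(p+n)−1) symmetric matrix associated to Z, with diagonal part A and off-diagonal part E, and let S_k be the terms of the diagonal expansion of det(A+E). Then det Q = det A + S_{2(p+n)−3} + S_{2(p+n)−5}; that is, the only contributions to det Q beyond the product of the diagonal entries come from 2×2 and 4×4 principal minors of E. -/

import Mathlib

/-- The `(m+n−1) × (m+n−1)` symmetric matrix `Q` associated to an `m × n` matrix `Z`. -/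
noncomputable def Qmat {m n : ℕ} (z : Fin m → Fin n → ℝ) :
    Matrix (Fin (m + n - 1)) (Fin (m + n - 1)) ℝ :=
  Matrix.of fun i j =>
    if hi : (i : ℕ) < m then
      if hj : (j : ℕ) < m then
        if i = j then ∑ k : Fin n, (z ⟨i, hi⟩ k + z ⟨i, hi⟩ k ^ 2) else 0
      else
        z ⟨i, hi⟩ ⟨(j : ℕ) - m, by have := j.isLt; omega⟩ ^ 2
          + z ⟨i, hi⟩ ⟨(j : ℕ) - m, by have := j.isLt; omega⟩
    else
      if hj : (j : ℕ) < m then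
        z ⟨j, hj⟩ ⟨(i : ℕ) - m, by have := i.isLt; omega⟩ ^ 2
          + z ⟨j, hj⟩ ⟨(i : ℕ) - m, by have := i.isLt; omega⟩
      else
        if i = j then
          ∑ l : Fin m, (z l ⟨(i : ℕ) - m, by have := i.isLt; omega⟩
            + z l ⟨(i : ℕ) - m, by have := i.isLt; omega⟩ ^ 2)
        else 0

/-- The principal minor of `E` on the index set `T`. -/
noncomputable def principalMinor {N : ℕ} (E : Matrix (Fin N) (Fin N) ℝ)
    (T : Finset (Fin N)) : ℝ :=
  (E.submatrix (T.orderEmbOfFin rfl) (T.orderEmbOfFin rfl)).det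

/-- The term `S_k` of the diagonal expansion of `det(A + E)` with `A = diag(a)`. -/
noncomputable def Sterm {N : ℕ} (a : Fin N → ℝ) (E : Matrix (Fin N) (Fin N) ℝ)
    (k : ℕ) : ℝ :=
  ∑ S ∈ Finset.powersetCard k (Finset.univ : Finset (Fin N)),
    (∏ i ∈ S, a i) * principalMinor E Sᶜ

/-- The `(p+n) × (p+n)` block matrix with value `a` on the top-left `p × p` block, `c` on
the bottom-right `n × n` block, and `b` on the two off-diagonal blocks. -/
def blockZ (p n : ℕ) (a b c : ℝ) : Fin (p + n) → Fin (p + n) → ℝ :=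
  fun i j =>
    if (i : ℕ) < p then (if (j : ℕ) < p then a else b)
    else (if (j : ℕ) < p then b else c)






open Matrix Finset in
lemma det_piecewise_single (N : ℕ) (E : Matrix (Fin N) (Fin N) ℝ) (S : Finset (Fin N)) :
    (Matrix.of (S.piecewise (fun i => Pi.single i (1:ℝ)) E)).det = principalMinor E Sᶜ := by
  classical
  set f := (Sᶜ).orderEmbOfFin rfl with hf
  set g := S.orderEmbOfFin rfl with hg
  have hfmem : ∀ i, f i ∈ Sᶜ := fun i => Finset.orderEmbOfFin_mem _ rfl i
  have hgmem : ∀ i, g i ∈ S := fun i => Finset.orderEmbOfFin_mem _ rfl i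
  have hcard : (Sᶜ).card + S.card = N := by
    have := Finset.card_compl S (α := Fin N)
    have hle := Finset.card_le_univ S
    simp [Finset.card_compl] at *
    omega
  have hinj : Function.Injective (Sum.elim (fun i => f i) (fun j => g j) :
      Fin (Sᶜ).card ⊕ Fin S.card → Fin N) := by
    rintro (i | i) (j | j) h <;> simp only [Sum.elim_inl, Sum.elim_inr] at h
    · exact congrArg Sum.inl (f.injective h)
    · exact absurd (hfmem i) (by rw [h]; simpa using hgmem j)
    · exact absurd (hfmem j) (by rw [← h]; simpa using hgmem i)
    · exact congrArg Sum.inr (g.injective h)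
  have hbij : Function.Bijective (Sum.elim (fun i => f i) (fun j => g j) :
      Fin (Sᶜ).card ⊕ Fin S.card → Fin N) := by
    rw [Fintype.bijective_iff_injective_and_card]
    exact ⟨hinj, by simp [hcard]⟩
  set e := Equiv.ofBijective _ hbij with he
  have he1 : ∀ i, e (Sum.inl i) = f i := fun i => rfl
  have he2 : ∀ j, e (Sum.inr j) = g j := fun j => rfl
  have key : (Matrix.of (S.piecewise (fun i => Pi.single i (1:ℝ)) E)).submatrix e e =
      Matrix.fromBlocks (E.submatrix (fun i => f i) (fun i => f i))
        (E.submatrix (fun i => f i) (fun j => g j)) 0 1 := by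
    ext i j
    rcases i with i | i <;> rcases j with j | j <;>
      simp only [Matrix.submatrix_apply, he1, he2, Matrix.of_apply,
        Matrix.fromBlocks_apply₁₁, Matrix.fromBlocks_apply₁₂,
        Matrix.fromBlocks_apply₂₁, Matrix.fromBlocks_apply₂₂]
    · erw [Finset.piecewise_eq_of_notMem]
      have := hfmem i; simp at this; exact this
    · erw [Finset.piecewise_eq_of_notMem]
      have := hfmem i; simp at this; exact this
    · erw [Finset.piecewise_eq_of_mem _ _ _ (hgmem i)]
      have : f j ≠ g i := by
        intro h; exact absurd (hfmem j) (by rw [h]; simpa using hgmem i)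
      simp [Pi.single_apply, this]
    · erw [Finset.piecewise_eq_of_mem _ _ _ (hgmem i)]
      simp [Pi.single_apply, Matrix.one_apply, g.injective.eq_iff, eq_comm]
  have := Matrix.det_submatrix_equiv_self e
    (Matrix.of (S.piecewise (fun i => Pi.single i (1:ℝ)) E))
  rw [← this, key, Matrix.det_fromBlocks_zero₂₁]
  simp [principalMinor]
  rfl

open Matrix Finset in
lemma det_add_diagonal_expansion {N : ℕ} (d : Fin N → ℝ) (E : Matrix (Fin N) (Fin N) ℝ) :
    (Matrix.diagonal d + E).det =
      ∑ S : Finset (Fin N), (∏ i ∈ S, d i) * principalMinor E Sᶜ := by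
  classical
  set F := (Matrix.detRowAlternating :
      (Fin N → ℝ) [⋀^Fin N]→ₗ[ℝ] ℝ).toMultilinearMap with hF
  have h1 : (Matrix.diagonal d + E).det =
      F ((fun i => Matrix.diagonal d i) + (fun i => E i)) := rfl
  rw [h1, MultilinearMap.map_add_univ]
  apply Finset.sum_congr rfl
  intro S _
  have hpw : S.piecewise (fun i => Matrix.diagonal d i) (fun i => E i) =
      S.piecewise (fun i => d i • (S.piecewise (fun i => Pi.single i (1:ℝ)) E) i)
        (S.piecewise (fun i => Pi.single i (1:ℝ)) E) := by
    funext i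
    by_cases hi : i ∈ S
    · erw [Finset.piecewise_eq_of_mem _ _ _ hi, Finset.piecewise_eq_of_mem _ _ _ hi,
        Finset.piecewise_eq_of_mem _ _ _ hi]
      funext j
      simp only [Matrix.diagonal_apply, Pi.smul_apply, Pi.single_apply, smul_eq_mul]
      by_cases h : i = j
      · subst h; simp
      · rw [if_neg h, if_neg (Ne.symm h), mul_zero]
    · erw [Finset.piecewise_eq_of_notMem _ _ _ hi, Finset.piecewise_eq_of_notMem _ _ _ hi,
        Finset.piecewise_eq_of_notMem _ _ _ hi]
  rw [hpw, F.map_piecewise_smul d (S.piecewise (fun i => Pi.single i (1:ℝ)) E) S,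
    smul_eq_mul]
  congr 1
  exact det_piecewise_single N E S

open Matrix in
lemma principalMinor_eq_zero_of_odd {N : ℕ} (E : Matrix (Fin N) (Fin N) ℝ)
    (P : Fin N → Prop) [DecidablePred P]
    (h0 : ∀ i j, (P i ↔ P j) → E i j = 0)
    (T : Finset (Fin N)) (hT : Odd T.card) : principalMinor E T = 0 := by
  classical
  set f := T.orderEmbOfFin rfl with hf
  set M := E.submatrix (f ·) (f ·) with hM
  have hpm : principalMinor E T = M.det := rfl
  set d : Fin T.card → ℝ := fun i => if P (f i) then 1 else -1 with hd
  have hMd : M = (-1 : ℝ) • (Matrix.diagonal d * M * Matrix.diagonal d) := by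
    ext i j
    rw [Matrix.smul_apply, Matrix.mul_diagonal, Matrix.diagonal_mul, smul_eq_mul]
    by_cases hij : P (f i) ↔ P (f j)
    · have : M i j = 0 := h0 _ _ hij
      rw [this]; ring
    · have hdd : d i * d j = -1 := by
        rw [hd]
        by_cases h1 : P (f i) <;> by_cases h2 : P (f j) <;>
          simp [h1, h2] <;> tauto
      calc M i j = -1 * (M i j * (d i * d j)) := by rw [hdd]; ring
      _ = -1 * (d i * M i j * d j) := by ring
  have hdet := congrArg Matrix.det hMd
  rw [Matrix.det_smul, Matrix.det_mul, Matrix.det_mul, Matrix.det_diagonal] at hdet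
  have hc : (∏ i, d i) * (∏ i, d i) = 1 := by
    rw [← Finset.prod_mul_distrib]
    apply Finset.prod_eq_one
    intro i _
    by_cases h1 : P (f i) <;> simp [hd, h1]
  have hpow : (-1 : ℝ) ^ Fintype.card (Fin T.card) = -1 := by
    rw [Fintype.card_fin]; exact Odd.neg_one_pow hT
  rw [hpow] at hdet
  have : M.det = - ((∏ i, d i) * (∏ i, d i) * M.det) := by linarith [hdet]
  rw [hc] at this
  rw [hpm]; linarith

open Matrix in
lemma principalMinor_eq_zero_of_rank {N : ℕ} (E : Matrix (Fin N) (Fin N) ℝ)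
    (x y : Fin 4 → Fin N → ℝ)
    (hEd : ∀ i j, E i j = ∑ l : Fin 4, x l i * y l j)
    (T : Finset (Fin N)) (hT : 5 ≤ T.card) : principalMinor E T = 0 := by
  classical
  set f := T.orderEmbOfFin rfl with hf
  set M := E.submatrix (f ·) (f ·) with hM
  have hpm : principalMinor E T = M.det := rfl
  set X : Matrix (Fin T.card) (Fin 4) ℝ := Matrix.of fun i l => x l (f i) with hX
  set Y : Matrix (Fin 4) (Fin T.card) ℝ := Matrix.of fun l j => y l (f j) with hY
  have hXY : M = X * Y := by
    ext i j
    rw [Matrix.mul_apply, hM]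
    simp only [Matrix.submatrix_apply, hX, hY, Matrix.of_apply]
    exact hEd (f i) (f j)
  rw [hpm]
  by_contra h
  have hu : IsUnit M := (Matrix.isUnit_iff_isUnit_det M).mpr (isUnit_iff_ne_zero.mpr h)
  have hr := Matrix.rank_of_isUnit M hu
  have h2 : M.rank ≤ 4 := by
    rw [hXY]
    exact le_trans (Matrix.rank_mul_le_left X Y) (by simpa using X.rank_le_card_width)
  rw [hr] at h2
  simp only [Fintype.card_fin] at h2
  omega


noncomputable def xvec (p m N : ℕ) : Fin 4 → Fin N → ℝ :=
  ![fun i => if (i : ℕ) < p then 1 else 0,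
    fun i => if (i : ℕ) < m ∧ ¬ (i : ℕ) < p then 1 else 0,
    fun i => if m ≤ (i : ℕ) ∧ (i : ℕ) - m < p then 1 else 0,
    fun i => if m ≤ (i : ℕ) ∧ ¬ (i : ℕ) - m < p then 1 else 0]

noncomputable def yvec (p m N : ℕ) (a b c : ℝ) : Fin 4 → Fin N → ℝ :=
  ![fun j => (a ^ 2 + a) * (xvec p m N 2 j) + (b ^ 2 + b) * (xvec p m N 3 j),
    fun j => (b ^ 2 + b) * (xvec p m N 2 j) + (c ^ 2 + c) * (xvec p m N 3 j),
    fun j => (a ^ 2 + a) * (xvec p m N 0 j) + (b ^ 2 + b) * (xvec p m N 1 j),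
    fun j => (b ^ 2 + b) * (xvec p m N 0 j) + (c ^ 2 + c) * (xvec p m N 1 j)]

theorem det_Q_diagonal_expansion_block (p n : ℕ) (hp : 1 ≤ p) (hn : 1 ≤ n)
    (a b c : ℝ)
    (Q : Matrix (Fin ((p + n) + (p + n) - 1)) (Fin ((p + n) + (p + n) - 1)) ℝ)
    (hQ : Q = Qmat (blockZ p n a b c))
    (E : Matrix (Fin ((p + n) + (p + n) - 1)) (Fin ((p + n) + (p + n) - 1)) ℝ)
    (hE : E = Q - Matrix.diagonal (fun i => Q i i)) :
    Q.det = (Matrix.diagonal (fun i => Q i i)).det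
        + Sterm (fun i => Q i i) E (2 * (p + n) - 3)
        + Sterm (fun i => Q i i) E (2 * (p + n) - 5) := by
  classical
  have hbip : ∀ i j : Fin ((p + n) + (p + n) - 1),
      (((i : ℕ) < p + n) ↔ ((j : ℕ) < p + n)) → E i j = 0 := by
    intro i j hij
    by_cases h : i = j
    · subst h; rw [hE]; simp
    · rw [hE]
      simp only [Matrix.sub_apply, Matrix.diagonal_apply_ne _ h, sub_zero]
      rw [hQ]
      simp only [Qmat, Matrix.of_apply]
      by_cases hi : (i : ℕ) < p + n
      · rw [dif_pos hi, dif_pos (hij.mp hi), if_neg h]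
      · rw [dif_neg hi, dif_neg (fun hj => hi (hij.mpr hj)), if_neg h]
  have key : ∀ i j : Fin ((p + n) + (p + n) - 1),
      E i j = ∑ l : Fin 4,
        xvec p (p + n) ((p + n) + (p + n) - 1) l i
          * yvec p (p + n) ((p + n) + (p + n) - 1) a b c l j := by
    intro i j
    by_cases hi : (i : ℕ) < p + n <;> by_cases hj : (j : ℕ) < p + n
    · rw [hbip i j (by tauto)]
      simp only [blockZ, xvec, yvec, Fin.sum_univ_four, Matrix.cons_val_zero,
        Matrix.cons_val_one, Matrix.head_cons, Matrix.cons_val_two, Matrix.tail_cons,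
        Matrix.cons_val_three, Matrix.head_fin_const]
      simp only [
        if_neg (show ¬(p + n ≤ (↑i : ℕ) ∧ (↑i : ℕ) - (p + n) < p) by omega),
        if_neg (show ¬(p + n ≤ (↑i : ℕ) ∧ ¬(↑i : ℕ) - (p + n) < p) by omega),
        if_neg (show ¬(p + n ≤ (↑j : ℕ) ∧ (↑j : ℕ) - (p + n) < p) by omega),
        if_neg (show ¬(p + n ≤ (↑j : ℕ) ∧ ¬(↑j : ℕ) - (p + n) < p) by omega)]
      ring
    · have hne : i ≠ j := by intro h; subst h; omega
      rw [hE]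
      simp only [Matrix.sub_apply, Matrix.diagonal_apply_ne _ hne, sub_zero]
      rw [hQ]
      simp only [Qmat, Matrix.of_apply]
      rw [dif_pos hi, dif_neg hj]
      simp only [blockZ, xvec, yvec, Fin.sum_univ_four, Matrix.cons_val_zero,
        Matrix.cons_val_one, Matrix.head_cons, Matrix.cons_val_two, Matrix.tail_cons,
        Matrix.cons_val_three, Matrix.head_fin_const]
      by_cases hip : (↑i : ℕ) < p <;> by_cases hjp : (↑j : ℕ) - (p + n) < p
      · simp only [
          if_pos (show (↑i : ℕ) < p by omega),
          if_neg (show ¬((↑i : ℕ) < p + n ∧ ¬(↑i : ℕ) < p) by omega),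
          if_neg (show ¬(p + n ≤ (↑i : ℕ) ∧ (↑i : ℕ) - (p + n) < p) by omega),
          if_neg (show ¬(p + n ≤ (↑i : ℕ) ∧ ¬(↑i : ℕ) - (p + n) < p) by omega),
          if_neg (show ¬((↑j : ℕ) < p) by omega),
          if_neg (show ¬((↑j : ℕ) < p + n ∧ ¬(↑j : ℕ) < p) by omega),
          if_pos (show p + n ≤ (↑j : ℕ) ∧ (↑j : ℕ) - (p + n) < p by omega),
          if_neg (show ¬(p + n ≤ (↑j : ℕ) ∧ ¬(↑j : ℕ) - (p + n) < p) by omega),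
          if_pos (show (↑j : ℕ) - (p + n) < p by omega)]
        ring
      · simp only [
          if_pos (show (↑i : ℕ) < p by omega),
          if_neg (show ¬((↑i : ℕ) < p + n ∧ ¬(↑i : ℕ) < p) by omega),
          if_neg (show ¬(p + n ≤ (↑i : ℕ) ∧ (↑i : ℕ) - (p + n) < p) by omega),
          if_neg (show ¬(p + n ≤ (↑i : ℕ) ∧ ¬(↑i : ℕ) - (p + n) < p) by omega),
          if_neg (show ¬((↑j : ℕ) < p) by omega),
          if_neg (show ¬((↑j : ℕ) < p + n ∧ ¬(↑j : ℕ) < p) by omega),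
          if_neg (show ¬(p + n ≤ (↑j : ℕ) ∧ (↑j : ℕ) - (p + n) < p) by omega),
          if_pos (show p + n ≤ (↑j : ℕ) ∧ ¬(↑j : ℕ) - (p + n) < p by omega),
          if_neg (show ¬((↑j : ℕ) - (p + n) < p) by omega)]
        ring
      · simp only [
          if_neg (show ¬((↑i : ℕ) < p) by omega),
          if_pos (show (↑i : ℕ) < p + n ∧ ¬(↑i : ℕ) < p by omega),
          if_neg (show ¬(p + n ≤ (↑i : ℕ) ∧ (↑i : ℕ) - (p + n) < p) by omega),
          if_neg (show ¬(p + n ≤ (↑i : ℕ) ∧ ¬(↑i : ℕ) - (p + n) < p) by omega),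
          if_neg (show ¬((↑j : ℕ) < p) by omega),
          if_neg (show ¬((↑j : ℕ) < p + n ∧ ¬(↑j : ℕ) < p) by omega),
          if_pos (show p + n ≤ (↑j : ℕ) ∧ (↑j : ℕ) - (p + n) < p by omega),
          if_neg (show ¬(p + n ≤ (↑j : ℕ) ∧ ¬(↑j : ℕ) - (p + n) < p) by omega),
          if_pos (show (↑j : ℕ) - (p + n) < p by omega)]
        ring
      · simp only [
          if_neg (show ¬((↑i : ℕ) < p) by omega),
          if_pos (show (↑i : ℕ) < p + n ∧ ¬(↑i : ℕ) < p by omega),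
          if_neg (show ¬(p + n ≤ (↑i : ℕ) ∧ (↑i : ℕ) - (p + n) < p) by omega),
          if_neg (show ¬(p + n ≤ (↑i : ℕ) ∧ ¬(↑i : ℕ) - (p + n) < p) by omega),
          if_neg (show ¬((↑j : ℕ) < p) by omega),
          if_neg (show ¬((↑j : ℕ) < p + n ∧ ¬(↑j : ℕ) < p) by omega),
          if_neg (show ¬(p + n ≤ (↑j : ℕ) ∧ (↑j : ℕ) - (p + n) < p) by omega),
          if_pos (show p + n ≤ (↑j : ℕ) ∧ ¬(↑j : ℕ) - (p + n) < p by omega),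
          if_neg (show ¬((↑j : ℕ) - (p + n) < p) by omega)]
        ring
    · have hne : i ≠ j := by intro h; subst h; omega
      rw [hE]
      simp only [Matrix.sub_apply, Matrix.diagonal_apply_ne _ hne, sub_zero]
      rw [hQ]
      simp only [Qmat, Matrix.of_apply]
      rw [dif_neg hi, dif_pos hj]
      simp only [blockZ, xvec, yvec, Fin.sum_univ_four, Matrix.cons_val_zero,
        Matrix.cons_val_one, Matrix.head_cons, Matrix.cons_val_two, Matrix.tail_cons,
        Matrix.cons_val_three, Matrix.head_fin_const]
      by_cases hjp : (↑j : ℕ) < p <;> by_cases hip : (↑i : ℕ) - (p + n) < p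
      · simp only [
          if_pos (show (↑j : ℕ) < p by omega),
          if_neg (show ¬((↑j : ℕ) < p + n ∧ ¬(↑j : ℕ) < p) by omega),
          if_neg (show ¬(p + n ≤ (↑j : ℕ) ∧ (↑j : ℕ) - (p + n) < p) by omega),
          if_neg (show ¬(p + n ≤ (↑j : ℕ) ∧ ¬(↑j : ℕ) - (p + n) < p) by omega),
          if_neg (show ¬((↑i : ℕ) < p) by omega),
          if_neg (show ¬((↑i : ℕ) < p + n ∧ ¬(↑i : ℕ) < p) by omega),
          if_pos (show p + n ≤ (↑i : ℕ) ∧ (↑i : ℕ) - (p + n) < p by omega),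
          if_neg (show ¬(p + n ≤ (↑i : ℕ) ∧ ¬(↑i : ℕ) - (p + n) < p) by omega),
          if_pos (show (↑i : ℕ) - (p + n) < p by omega)]
        ring
      · simp only [
          if_pos (show (↑j : ℕ) < p by omega),
          if_neg (show ¬((↑j : ℕ) < p + n ∧ ¬(↑j : ℕ) < p) by omega),
          if_neg (show ¬(p + n ≤ (↑j : ℕ) ∧ (↑j : ℕ) - (p + n) < p) by omega),
          if_neg (show ¬(p + n ≤ (↑j : ℕ) ∧ ¬(↑j : ℕ) - (p + n) < p) by omega),
          if_neg (show ¬((↑i : ℕ) < p) by omega),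
          if_neg (show ¬((↑i : ℕ) < p + n ∧ ¬(↑i : ℕ) < p) by omega),
          if_neg (show ¬(p + n ≤ (↑i : ℕ) ∧ (↑i : ℕ) - (p + n) < p) by omega),
          if_pos (show p + n ≤ (↑i : ℕ) ∧ ¬(↑i : ℕ) - (p + n) < p by omega),
          if_neg (show ¬((↑i : ℕ) - (p + n) < p) by omega)]
        ring
      · simp only [
          if_neg (show ¬((↑j : ℕ) < p) by omega),
          if_pos (show (↑j : ℕ) < p + n ∧ ¬(↑j : ℕ) < p by omega),
          if_neg (show ¬(p + n ≤ (↑j : ℕ) ∧ (↑j : ℕ) - (p + n) < p) by omega),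
          if_neg (show ¬(p + n ≤ (↑j : ℕ) ∧ ¬(↑j : ℕ) - (p + n) < p) by omega),
          if_neg (show ¬((↑i : ℕ) < p) by omega),
          if_neg (show ¬((↑i : ℕ) < p + n ∧ ¬(↑i : ℕ) < p) by omega),
          if_pos (show p + n ≤ (↑i : ℕ) ∧ (↑i : ℕ) - (p + n) < p by omega),
          if_neg (show ¬(p + n ≤ (↑i : ℕ) ∧ ¬(↑i : ℕ) - (p + n) < p) by omega),
          if_pos (show (↑i : ℕ) - (p + n) < p by omega)]
        ring
      · simp only [
          if_neg (show ¬((↑j : ℕ) < p) by omega),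
          if_pos (show (↑j : ℕ) < p + n ∧ ¬(↑j : ℕ) < p by omega),
          if_neg (show ¬(p + n ≤ (↑j : ℕ) ∧ (↑j : ℕ) - (p + n) < p) by omega),
          if_neg (show ¬(p + n ≤ (↑j : ℕ) ∧ ¬(↑j : ℕ) - (p + n) < p) by omega),
          if_neg (show ¬((↑i : ℕ) < p) by omega),
          if_neg (show ¬((↑i : ℕ) < p + n ∧ ¬(↑i : ℕ) < p) by omega),
          if_neg (show ¬(p + n ≤ (↑i : ℕ) ∧ (↑i : ℕ) - (p + n) < p) by omega),
          if_pos (show p + n ≤ (↑i : ℕ) ∧ ¬(↑i : ℕ) - (p + n) < p by omega),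
          if_neg (show ¬((↑i : ℕ) - (p + n) < p) by omega)]
        ring
    · rw [hbip i j (by tauto)]
      simp only [blockZ, xvec, yvec, Fin.sum_univ_four, Matrix.cons_val_zero,
        Matrix.cons_val_one, Matrix.head_cons, Matrix.cons_val_two, Matrix.tail_cons,
        Matrix.cons_val_three, Matrix.head_fin_const]
      simp only [
        if_neg (show ¬((↑i : ℕ) < p) by omega),
        if_neg (show ¬((↑i : ℕ) < p + n ∧ ¬(↑i : ℕ) < p) by omega),
        if_neg (show ¬((↑j : ℕ) < p) by omega),
        if_neg (show ¬((↑j : ℕ) < p + n ∧ ¬(↑j : ℕ) < p) by omega)]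
      ring
  have hodd : ∀ T : Finset (Fin ((p + n) + (p + n) - 1)), Odd T.card →
      principalMinor E T = 0 :=
    principalMinor_eq_zero_of_odd E (fun i => (i : ℕ) < p + n) hbip
  have hbig : ∀ T : Finset (Fin ((p + n) + (p + n) - 1)), 5 ≤ T.card →
      principalMinor E T = 0 :=
    principalMinor_eq_zero_of_rank E _ _ key
  have hQE : Q = Matrix.diagonal (fun i => Q i i) + E := by
    rw [hE]; ext i j; simp [Matrix.sub_apply]
  have hexp : Q.det = ∑ k ∈ Finset.range (((p + n) + (p + n) - 1) + 1),
      Sterm (fun i => Q i i) E k := by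
    conv_lhs => rw [hQE]
    rw [det_add_diagonal_expansion]
    rw [show (Finset.univ : Finset (Finset (Fin ((p + n) + (p + n) - 1)))) =
      (Finset.univ : Finset (Fin ((p + n) + (p + n) - 1))).powerset from
      (Finset.powerset_univ).symm]
    rw [Finset.sum_powerset]
    rw [Finset.card_univ, Fintype.card_fin]
    rfl
  have hvan : ∀ k ∈ Finset.range (((p + n) + (p + n) - 1) + 1),
      k ∉ ({(p + n) + (p + n) - 1, (p + n) + (p + n) - 1 - 2,
        (p + n) + (p + n) - 1 - 4} : Finset ℕ) → Sterm (fun i => Q i i) E k = 0 := by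
    intro k hk hkK
    simp only [Finset.mem_insert, Finset.mem_singleton] at hkK
    push_neg at hkK
    obtain ⟨h1, h2, h3⟩ := hkK
    have hkN : k ≤ (p + n) + (p + n) - 1 := by
      simp only [Finset.mem_range] at hk; omega
    apply Finset.sum_eq_zero
    intro S hS
    have hcard : S.card = k := (Finset.mem_powersetCard.mp hS).2
    have hcc : (Sᶜ).card = (p + n) + (p + n) - 1 - k := by
      rw [Finset.card_compl, hcard, Fintype.card_fin]
    rcases Nat.even_or_odd ((p + n) + (p + n) - 1 - k) with he | ho
    · have h5 : 5 ≤ (Sᶜ).card := by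
        obtain ⟨t, ht⟩ := he; rw [hcc]; omega
      rw [hbig _ h5, mul_zero]
    · rw [hodd _ (hcc ▸ ho), mul_zero]
  have hsub : ({(p + n) + (p + n) - 1, (p + n) + (p + n) - 1 - 2,
      (p + n) + (p + n) - 1 - 4} : Finset ℕ) ⊆
      Finset.range (((p + n) + (p + n) - 1) + 1) := by
    intro k hk
    simp only [Finset.mem_insert, Finset.mem_singleton] at hk
    simp only [Finset.mem_range]
    omega
  have hsplit := Finset.sum_subset hsub hvan
  have hSN : Sterm (fun i : Fin ((p + n) + (p + n) - 1) => Q i i) E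
      ((p + n) + (p + n) - 1) = (Matrix.diagonal (fun i => Q i i)).det := by
    unfold Sterm
    have hpc : Finset.powersetCard ((p + n) + (p + n) - 1)
        (Finset.univ : Finset (Fin ((p + n) + (p + n) - 1))) = {Finset.univ} := by
      simpa using Finset.powersetCard_self (Finset.univ : Finset (Fin ((p + n) + (p + n) - 1)))
    rw [hpc, Finset.sum_singleton, Matrix.det_diagonal]
    have hcompl : (Finset.univ : Finset (Fin ((p + n) + (p + n) - 1)))ᶜ = ∅ :=
      Finset.compl_univ
    rw [hcompl]
    have hpm1 : principalMinor E ∅ = 1 := by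
      haveI : IsEmpty (Fin (∅ : Finset (Fin ((p + n) + (p + n) - 1))).card) := by
        rw [Finset.card_empty]; infer_instance
      exact Matrix.det_isEmpty
    rw [hpm1, mul_one]
  have he1 : 2 * (p + n) - 3 = (p + n) + (p + n) - 1 - 2 := by omega
  have he2 : 2 * (p + n) - 5 = (p + n) + (p + n) - 1 - 4 := by omega
  rw [hexp, ← hsplit, he1, he2, ← hSN]
  rw [Finset.sum_insert (by simp only [Finset.mem_insert, Finset.mem_singleton]; omega),
    Finset.sum_insert (by simp only [Finset.mem_singleton]; omega),
    Finset.sum_singleton]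
  ring
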